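/- arXiv:1302.0924 — 3 statements merged into one kernel-verified Lean document; each statement's English description precedes it below -/
import Mathlib

section
/- Let {P_θ : θ ∈ Θ} be a family of probability measures on a measurable space (𝒳, 𝒜). Suppose ℬ ⊆ 𝒜 is an ancillary sub-σ-algebra (i.e., P_θ(B) is constant in θ for every B ∈ ℬ), 𝒞 ⊆ 𝒜 is a sub-σ-algebra such that ℬ and 𝒞 are independent under P_θ for every θ ∈ Θ, and the σ-algebra generated by 𝒞 ∪ ℬ equals 𝒜. Then 𝒞 is sufficient for the family: for every A ∈ 𝒜 there exists a 𝒞-measurable function φ_A (not depending on θ) such that φ_A is a version of the conditional expectation E_θ[1_A | 𝒞] under P_θ for every θ ∈ Θ. -/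
open MeasureTheory ProbabilityTheory

/-- Auxiliary: an `mC`-measurable `ℝ≥0∞`-valued function whose set-lintegrals over `mC`-sets are
dominated by the measure is a.e. bounded by 1. -/
lemma aux_ae_le_one {X : Type*} [mA : MeasurableSpace X]
    (μ : Measure X) [IsFiniteMeasure μ] {g : X → ENNReal} (hg : Measurable g)
    (h : ∀ c : ENNReal, ∫⁻ x in {x | c ≤ g x}, g x ∂μ ≤ μ {x | c ≤ g x}) : g ≤ᵐ[μ] 1 := by
  have hN : ∀ n : ℕ, μ {x | 1 + (n : ENNReal)⁻¹ ≤ g x} = 0 := by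
    intro n
    set c : ENNReal := 1 + (n : ENNReal)⁻¹ with hc
    set N : Set X := {x | c ≤ g x} with hNdef
    have h1 : c * μ N ≤ ∫⁻ x in N, g x ∂μ := by
      calc c * μ N = ∫⁻ _ in N, c ∂μ := by rw [setLIntegral_const, mul_comm]
        _ ≤ ∫⁻ x in N, g x ∂μ := setLIntegral_mono hg fun x hx => hx
    have h2 : c * μ N ≤ μ N := h1.trans (h c)
    by_contra hne
    have hμN : μ N ≠ 0 := hne
    have hμN' : μ N ≠ ⊤ := measure_ne_top μ N
    have h1c : 1 < c := by
      rw [hc]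
      exact ENNReal.lt_add_right ENNReal.one_ne_top (by simp)
    have : (1 : ENNReal) * μ N < c * μ N :=
      ENNReal.mul_lt_mul_left hμN hμN' h1c
    rw [one_mul] at this
    exact absurd h2 (not_le.2 this)
  have hcover : {x | 1 < g x} ⊆ ⋃ n : ℕ, {x | 1 + (n : ENNReal)⁻¹ ≤ g x} := by
    intro x hx
    have hx' : (1 : ENNReal) < g x := hx
    have hpos : g x - 1 ≠ 0 := by
      simp only [ne_eq, tsub_eq_zero_iff_le, not_le]
      exact hx'
    obtain ⟨n, hn⟩ := ENNReal.exists_inv_nat_lt hpos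
    refine Set.mem_iUnion.2 ⟨n, ?_⟩
    have : 1 + (n : ENNReal)⁻¹ ≤ 1 + (g x - 1) := add_le_add_right hn.le 1
    simpa [add_tsub_cancel_of_le hx'.le] using this
  have hnull : μ {x | 1 < g x} = 0 :=
    measure_mono_null hcover (measure_iUnion_null hN)
  refine (ae_iff).2 ?_
  convert hnull using 2
  ext x
  simp [not_le]

/-- If `mB` is an ancillary sub-σ-algebra, `mC` is a sub-σ-algebra independent of
`mB` under every `P θ`, and together they generate the full σ-algebra, then `mC` is sufficient:
every indicator `1_A` admits a single `mC`-measurable version of its conditional expectation,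
valid simultaneously for all `θ`. -/
theorem sufficiency_of_independent_complement_of_ancillary
    {X Θ : Type*} [mA : MeasurableSpace X]
    (P : Θ → Measure X) [∀ θ, IsProbabilityMeasure (P θ)]
    (mB mC : MeasurableSpace X) (hB : mB ≤ mA) (hC : mC ≤ mA)
    (hanc : ∀ B : Set X, MeasurableSet[mB] B → ∀ θ θ' : Θ, P θ B = P θ' B)
    (hindep : ∀ θ : Θ, Indep mB mC (P θ))
    (hgen : mB ⊔ mC = mA) :
    ∀ A : Set X, MeasurableSet[mA] A →
      ∃ φ : X → ℝ, StronglyMeasurable[mC] φ ∧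
        ∀ θ : Θ, φ =ᵐ[P θ] (P θ)[Set.indicator A (fun _ => (1 : ℝ)) | mC] := by
  rcases isEmpty_or_nonempty Θ with hΘ | hΘ
  · exact fun A hA => ⟨0, stronglyMeasurable_const, fun θ => (IsEmpty.false θ).elim⟩
  obtain ⟨θ₀⟩ := hΘ
  -- the generating π-system
  set s : Set (Set X) := {A | ∃ B C : Set X, MeasurableSet[mB] B ∧ MeasurableSet[mC] C ∧
    A = B ∩ C} with hs
  have h_inter : IsPiSystem s := by
    rintro A₁ ⟨B₁, C₁, hB₁, hC₁, rfl⟩ A₂ ⟨B₂, C₂, hB₂, hC₂, rfl⟩ -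
    exact ⟨B₁ ∩ B₂, C₁ ∩ C₂, hB₁.inter hB₂, hC₁.inter hC₂, by
      ext x; simp; tauto⟩
  have h_eq : mA = MeasurableSpace.generateFrom s := by
    refine le_antisymm ?_ ?_
    · rw [← hgen]
      refine sup_le ?_ ?_
      · intro B hBm
        exact MeasurableSpace.measurableSet_generateFrom
          ⟨B, Set.univ, hBm, MeasurableSet.univ, by simp⟩
      · intro C hCm
        exact MeasurableSpace.measurableSet_generateFrom
          ⟨Set.univ, C, MeasurableSet.univ, hCm, by simp⟩
    · refine MeasurableSpace.generateFrom_le ?_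
      rintro A ⟨B, C, hBm, hCm, rfl⟩
      exact (hB B hBm).inter (hC C hCm)
  -- main induction in ℝ≥0∞ land
  have main : ∀ ⦃A : Set X⦄, MeasurableSet[mA] A → ∃ φ : X → ENNReal, Measurable[mC] φ ∧
      (∀ θ, φ ≤ᵐ[P θ] 1) ∧
      ∀ θ, ∀ t, MeasurableSet[mC] t → ∫⁻ x in t, φ x ∂(P θ) = P θ (A ∩ t) := by
    refine MeasurableSpace.induction_on_inter (m := mA) h_eq h_inter ?_ ?_ ?_ ?_
    · -- empty set
      refine ⟨0, measurable_const, fun θ => Filter.Eventually.of_forall (by simp), ?_⟩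
      intro θ t ht
      simp
    · -- basic sets B ∩ C
      rintro A ⟨B, C, hBm, hCm, rfl⟩
      refine ⟨C.indicator fun _ => P θ₀ B, ?_, ?_, ?_⟩
      · exact (measurable_const : Measurable[mC] fun _ : X => P θ₀ B).indicator hCm
      · intro θ
        refine Filter.Eventually.of_forall fun x => ?_
        by_cases hx : x ∈ C
        · simpa [hx] using prob_le_one (μ := P θ₀) (s := B)
        · simp [hx]
      · intro θ t ht
        have hCA : MeasurableSet[mA] C := hC C hCm
        rw [lintegral_indicator hCA, setLIntegral_const, Measure.restrict_apply hCA]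
        have hI := (Indep_iff mB mC (P θ)).1 (hindep θ) B (C ∩ t) hBm (hCm.inter ht)
        rw [hanc B hBm θ₀ θ, ← hI, ← Set.inter_assoc]
    · -- complement
      rintro A hA ⟨φ, hφm, hφle, hφint⟩
      refine ⟨fun x => 1 - φ x, (measurable_const : Measurable[mC] fun _ : X => (1 : ENNReal)).sub hφm, ?_, ?_⟩
      · exact fun θ => Filter.Eventually.of_forall fun x => tsub_le_self
      · intro θ t ht
        have hφA : Measurable[mA] φ := fun u hu => hC _ (hφm hu)
        have hfin : ∫⁻ x in t, φ x ∂(P θ) ≠ ⊤ := by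
          rw [hφint θ t ht]; exact measure_ne_top _ _
        have hle' : φ ≤ᵐ[(P θ).restrict t] fun _ => (1 : ENNReal) :=
          ae_restrict_of_ae (hφle θ)
        letI : MeasurableSpace X := mA
        rw [lintegral_sub hφA hfin hle', hφint θ t ht, setLIntegral_one]
        have hAmA : MeasurableSet[mA] A := hA
        have hset : Aᶜ ∩ t = t \ (A ∩ t) := by ext x; simp; tauto
        rw [hset, measure_diff Set.inter_subset_right
          ((hAmA.inter (hC t ht)).nullMeasurableSet (μ := P θ)) (measure_ne_top _ _)]
    · -- disjoint union
      rintro f hdisj hfm hf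
      choose φ hφm hφle hφint using hf
      refine ⟨fun x => ∑' n, φ n x, Measurable.ennreal_tsum hφm, ?_, ?_⟩
      · intro θ
        have hgm : Measurable[mA] fun x => ∑' n, φ n x :=
          fun u hu => hC _ (Measurable.ennreal_tsum hφm hu)
        refine aux_ae_le_one (mA := mA) (P θ) hgm ?_
        intro c
        have ht : MeasurableSet[mC] {x | c ≤ (fun x => ∑' n, φ n x) x} :=
          Measurable.ennreal_tsum hφm measurableSet_Ici
        set t := {x | c ≤ (fun x => ∑' n, φ n x) x}
        rw [lintegral_tsum fun n => Measurable.aemeasurable (fun u hu => hC _ (hφm n hu) : Measurable[mA] (φ n))]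
        calc ∑' n, ∫⁻ x in t, φ n x ∂(P θ) = ∑' n, P θ (f n ∩ t) := by
              exact tsum_congr fun n => hφint n θ t ht
          _ = P θ (⋃ n, f n ∩ t) := by
              rw [measure_iUnion (fun i j hij =>
                  ((hdisj hij).mono Set.inter_subset_left Set.inter_subset_left))
                (fun n => (hfm n).inter (hC t ht))]
          _ ≤ P θ t := measure_mono (by simp [Set.iUnion_subset_iff])
      · intro θ t ht
        rw [lintegral_tsum fun n => Measurable.aemeasurable (fun u hu => hC _ (hφm n hu) : Measurable[mA] (φ n))]
        calc ∑' n, ∫⁻ x in t, φ n x ∂(P θ) = ∑' n, P θ (f n ∩ t) :=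
              tsum_congr fun n => hφint n θ t ht
          _ = P θ (⋃ n, f n ∩ t) := by
              rw [measure_iUnion (fun i j hij =>
                  ((hdisj hij).mono Set.inter_subset_left Set.inter_subset_left))
                (fun n => (hfm n).inter (hC t ht))]
          _ = P θ ((⋃ n, f n) ∩ t) := by rw [Set.iUnion_inter]
  -- conclude
  intro A hA
  obtain ⟨φ, hφm, hφle, hφint⟩ := main hA
  letI : MeasurableSpace X := mA
  refine ⟨fun x => (φ x).toReal, (ENNReal.measurable_toReal.comp hφm).stronglyMeasurable, ?_⟩
  intro θ
  have hφA : Measurable[mA] φ := fun u hu => hC _ (hφm hu)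
  have hint_ne : ∫⁻ x, φ x ∂(P θ) ≠ ⊤ := by
    rw [← setLIntegral_univ, hφint θ Set.univ MeasurableSet.univ]
    exact measure_ne_top _ _
  have hIntφ : Integrable (fun x => (φ x).toReal) (P θ) :=
    integrable_toReal_of_lintegral_ne_top hφA.aemeasurable hint_ne
  have hf1 : Integrable (A.indicator fun _ => (1 : ℝ)) (P θ) :=
    (integrable_const (1 : ℝ) : Integrable _ (P θ)).indicator hA
  have hsm : StronglyMeasurable[mC] fun x => (φ x).toReal :=
    (ENNReal.measurable_toReal.comp hφm).stronglyMeasurable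
  refine ae_eq_condExp_of_forall_setIntegral_eq hC hf1 (fun t ht _ => Integrable.integrableOn (μ := P θ) hIntφ)
    (fun t ht _ => ?_) (StronglyMeasurable.aestronglyMeasurable hsm)
  have hlt : ∀ᵐ x ∂(P θ).restrict t, φ x < ⊤ :=
    (ae_restrict_of_ae (hφle θ)).mono fun x hx => lt_of_le_of_lt hx (by simp)
  have hae : AEMeasurable φ ((P θ).restrict t) := Measurable.aemeasurable hφA
  rw [integral_toReal hae hlt, hφint θ t ht]
  rw [integral_indicator (μ := (P θ).restrict t) hA, setIntegral_const,
    measureReal_restrict_apply (μ := P θ) hA]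
  simp [Measure.real]
end

section
/- Let {P_θ : θ ∈ Θ} be a family of probability measures on (𝒳, 𝒜), let W be an ancillary statistic, and let g be a real-valued statistic such that: (i) E_θ|g|^k < ∞ for all integers k ≥ 1 and all θ; (ii) for every θ, polynomials in g are dense in L²(P_θ ∘ g⁻¹); and (iii) for every statistic U with E_θ U = 0 and E_θ U² < ∞ for all θ, E_θ(gU) = 0 for all θ (g is a UMVUE). Then g and W are independent under P_θ for every θ ∈ Θ, i.e., the joint law of (g, W) under P_θ equals the product of the laws of g and of W under P_θ. -/
open MeasureTheory ProbabilityTheory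
open scoped ENNReal

noncomputable section

/-- If `W` is ancillary, `g` has all moments finite, polynomials in `g` are
dense in `L²` of the law of `g`, and `g` is uncorrelated with every square-integrable unbiased
estimator of zero (i.e. `g` is a UMVUE), then `g` and `W` are independent under every `P θ`. -/
theorem UMVUE_indep_ancillary {X Θ 𝒲 : Type*} [MeasurableSpace X] [MeasurableSpace 𝒲]
    (P : Θ → Measure X) [∀ θ, IsProbabilityMeasure (P θ)]
    (W : X → 𝒲) (hW : Measurable W)
    (hanc : ∀ θ θ' : Θ, Measure.map W (P θ) = Measure.map W (P θ'))
    (g : X → ℝ) (hg : Measurable g)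
    (hmom : ∀ k : ℕ, 1 ≤ k → ∀ θ : Θ, MemLp g (k : ℝ≥0∞) (P θ))
    (hdense : ∀ θ : Θ, ∀ φ : ℝ → ℝ, MemLp φ 2 (Measure.map g (P θ)) →
      ∀ ε : ℝ, 0 < ε → ∃ p : Polynomial ℝ,
        eLpNorm (fun u => φ u - p.eval u) 2 (Measure.map g (P θ)) < ENNReal.ofReal ε)
    (huncorr : ∀ U : X → ℝ, Measurable U → (∀ θ : Θ, MemLp U 2 (P θ)) →
      (∀ θ : Θ, ∫ x, U x ∂(P θ) = 0) → ∀ θ : Θ, ∫ x, g x * U x ∂(P θ) = 0) :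
    ∀ θ : Θ, Measure.map (fun x => (g x, W x)) (P θ) =
      (Measure.map g (P θ)).prod (Measure.map W (P θ)) := by
  intro θ
  haveI h1 : IsProbabilityMeasure (Measure.map g (P θ)) :=
    Measure.isProbabilityMeasure_map hg.aemeasurable
  haveI h2 : IsProbabilityMeasure (Measure.map W (P θ)) :=
    Measure.isProbabilityMeasure_map hW.aemeasurable
  -- powers of g are in L²
  have mempow : ∀ (k : ℕ) (θ' : Θ), MemLp (fun x => g x ^ k) 2 (P θ') := by
    intro k θ'
    rcases Nat.eq_zero_or_pos k with hk | hk
    · subst hk; simpa using memLp_const (1 : ℝ)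
    · have h2k : MemLp g ((2 * k : ℕ) : ℝ≥0∞) (P θ') := hmom (2 * k) (by omega) θ'
      have hmain := h2k.norm_rpow_div (k : ℝ≥0∞)
      have hdiv : ((2 * k : ℕ) : ℝ≥0∞) / (k : ℝ≥0∞) = 2 := by
        rw [Nat.cast_mul, mul_div_assoc,
          ENNReal.div_self (by exact_mod_cast hk.ne') (ENNReal.natCast_ne_top k), mul_one]
        norm_num
      rw [hdiv] at hmain
      refine MemLp.of_le_mul (c := 1) hmain (hg.pow_const k).aestronglyMeasurable
        (Filter.Eventually.of_forall fun x => ?_)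
      have hk' : ((k : ℝ≥0∞)).toReal = (k : ℝ) := by simp
      rw [hk', one_mul, Real.rpow_natCast]
      simp [Real.norm_eq_abs, abs_pow, abs_abs]
  -- the main rectangle computation
  have key : ∀ B : Set 𝒲, MeasurableSet B → ∀ A : Set ℝ, MeasurableSet A →
      P θ (g ⁻¹' A ∩ W ⁻¹' B) = P θ (g ⁻¹' A) * P θ (W ⁻¹' B) := by
    intro B hB
    have hBm : MeasurableSet (W ⁻¹' B) := hW hB
    set c : ℝ := (P θ (W ⁻¹' B)).toReal with hcdef
    set U₀ : X → ℝ := fun x => (W ⁻¹' B).indicator (fun _ => (1 : ℝ)) x - c with hU₀def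
    have hU₀meas : Measurable U₀ :=
      (measurable_const.indicator hBm).sub measurable_const
    have hc0 : 0 ≤ c := ENNReal.toReal_nonneg
    have hc1 : c ≤ 1 := by
      have := ENNReal.toReal_mono ENNReal.one_ne_top (prob_le_one (μ := P θ) (s := W ⁻¹' B))
      simpa using this
    have hU₀bdd : ∀ x, ‖U₀ x‖ ≤ 2 := by
      intro x
      have hx0 : U₀ x = (W ⁻¹' B).indicator (fun _ => (1 : ℝ)) x - c := rfl
      rw [Real.norm_eq_abs, hx0]
      by_cases hx : x ∈ W ⁻¹' B
      · rw [Set.indicator_of_mem hx]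
        exact abs_le.mpr ⟨by linarith, by linarith⟩
      · rw [Set.indicator_of_notMem hx]
        exact abs_le.mpr ⟨by linarith, by linarith⟩
    -- measure of W ⁻¹' B is the same under every θ'
    have hmeasB : ∀ θ' : Θ, P θ' (W ⁻¹' B) = P θ (W ⁻¹' B) := by
      intro θ'
      have := hanc θ θ'
      rw [← Measure.map_apply hW hB, ← Measure.map_apply hW hB, this]
    -- U₀ has mean zero under every θ'
    have hU₀zero : ∀ θ' : Θ, ∫ x, U₀ x ∂(P θ') = 0 := by
      intro θ'
      show ∫ x, (W ⁻¹' B).indicator (fun _ => (1 : ℝ)) x - c ∂(P θ') = 0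
      rw [integral_sub ((integrable_const (1 : ℝ)).indicator hBm) (integrable_const c),
        integral_indicator_const (1 : ℝ) hBm, integral_const]
      simp [Measure.real, hmeasB θ', hcdef]
    -- g^k * U₀ is in L²
    have memU : ∀ (k : ℕ) (θ' : Θ), MemLp (fun x => g x ^ k * U₀ x) 2 (P θ') := by
      intro k θ'
      refine MemLp.of_le_mul (c := 2) (mempow k θ')
        ((hg.pow_const k).mul hU₀meas).aestronglyMeasurable
        (Filter.Eventually.of_forall fun x => ?_)
      rw [norm_mul, mul_comm (2 : ℝ)]
      exact mul_le_mul_of_nonneg_left (hU₀bdd x) (norm_nonneg _)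
    have intU : ∀ (k : ℕ) (θ' : Θ), Integrable (fun x => g x ^ k * U₀ x) (P θ') :=
      fun k θ' => (memU k θ').integrable one_le_two
    -- by induction, g^k is uncorrelated with U₀
    have hind : ∀ (k : ℕ) (θ' : Θ), ∫ x, g x ^ k * U₀ x ∂(P θ') = 0 := by
      intro k
      induction k with
      | zero => intro θ'; simpa using hU₀zero θ'
      | succ n ih =>
        intro θ'
        have h := huncorr (fun x => g x ^ n * U₀ x)
          ((hg.pow_const n).mul hU₀meas) (fun θ'' => memU n θ'') ih θ'
        rw [show (fun x => g x ^ (n + 1) * U₀ x)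
            = fun x => g x * (g x ^ n * U₀ x) from funext fun x => by ring]
        exact h
    -- polynomials in g are uncorrelated with U₀
    have hpoly : ∀ p : Polynomial ℝ, ∫ x, p.eval (g x) * U₀ x ∂(P θ) = 0 := by
      intro p
      have heq : (fun x => p.eval (g x) * U₀ x)
          = fun x => ∑ i ∈ Finset.range (p.natDegree + 1),
              p.coeff i * (g x ^ i * U₀ x) := by
        funext x
        rw [Polynomial.eval_eq_sum_range, Finset.sum_mul]
        congr 1; funext i; ring
      rw [heq, integral_finset_sum _ fun i _ => (intU i θ).const_mul _]
      refine Finset.sum_eq_zero fun i _ => ?_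
      rw [integral_const_mul, hind i θ, mul_zero]
    have hPint : ∀ p : Polynomial ℝ, Integrable (fun x => p.eval (g x)) (P θ) := by
      intro p
      have : MemLp (fun x => p.eval (g x)) 2 (P θ) := by
        have heq : (fun x => p.eval (g x))
            = fun x => ∑ i ∈ Finset.range (p.natDegree + 1), p.coeff i * g x ^ i := by
          funext x; rw [Polynomial.eval_eq_sum_range]
        rw [heq, show (fun x => ∑ i ∈ Finset.range (p.natDegree + 1), p.coeff i * g x ^ i)
            = ∑ i ∈ Finset.range (p.natDegree + 1), (fun x => p.coeff i * g x ^ i) from by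
          funext x; rw [Finset.sum_apply]]
        exact memLp_finset_sum' _ fun i _ => (mempow i θ).const_mul _
      exact this.integrable one_le_two
    have hPUint : ∀ p : Polynomial ℝ, Integrable (fun x => p.eval (g x) * U₀ x) (P θ) := by
      intro p
      have h := (hPint p).bdd_mul hU₀meas.aestronglyMeasurable (Filter.Eventually.of_forall hU₀bdd)
      exact h.congr (Filter.Eventually.of_forall fun x => mul_comm _ _)
    -- indicators of g are uncorrelated with U₀
    have hA0 : ∀ A : Set ℝ, MeasurableSet A →
        ∫ x, A.indicator (fun _ => (1 : ℝ)) (g x) * U₀ x ∂(P θ) = 0 := by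
      intro A hA
      set φ : ℝ → ℝ := A.indicator (fun _ => (1 : ℝ)) with hφdef
      have hφmeas : Measurable φ := measurable_const.indicator hA
      have hφbdd : ∀ u, ‖φ u‖ ≤ 1 := by
        intro u
        rw [hφdef, Real.norm_eq_abs]
        by_cases hu : u ∈ A
        · rw [Set.indicator_of_mem hu]; norm_num
        · rw [Set.indicator_of_notMem hu]; norm_num
      have hφmem : MemLp φ 2 (Measure.map g (P θ)) :=
        (memLp_const (1 : ℝ)).indicator hA
      have hφgint : Integrable (fun x => φ (g x)) (P θ) := by
        refine Integrable.mono' (integrable_const (1 : ℝ))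
          (hφmeas.comp hg).aestronglyMeasurable
          (Filter.Eventually.of_forall fun x => hφbdd (g x))
      have hφUint : Integrable (fun x => φ (g x) * U₀ x) (P θ) := by
        refine Integrable.mono' (integrable_const (2 : ℝ))
          ((hφmeas.comp hg).mul hU₀meas).aestronglyMeasurable
          (Filter.Eventually.of_forall fun x => ?_)
        rw [norm_mul]
        calc ‖φ (g x)‖ * ‖U₀ x‖ ≤ 1 * 2 :=
          mul_le_mul (hφbdd (g x)) (hU₀bdd x) (norm_nonneg _) zero_le_one
        _ = 2 := by norm_num
      -- the integral is bounded by 2ε for every ε > 0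
      have habs : ∀ ε : ℝ, 0 < ε → |∫ x, φ (g x) * U₀ x ∂(P θ)| ≤ 2 * ε := by
        intro ε hε
        obtain ⟨p, hp⟩ := hdense θ φ hφmem ε hε
        have hpmeas : Measurable fun u => p.eval u := (Polynomial.continuous p).measurable
        have hsplit : ∫ x, φ (g x) * U₀ x ∂(P θ)
            = ∫ x, (φ (g x) - p.eval (g x)) * U₀ x ∂(P θ) := by
          rw [show (fun x => (φ (g x) - p.eval (g x)) * U₀ x)
              = fun x => φ (g x) * U₀ x - p.eval (g x) * U₀ x from funext fun x => by ring,
            integral_sub hφUint (hPUint p), hpoly p, sub_zero]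
        rw [hsplit]
        set ψ : ℝ → ℝ := fun u => φ u - p.eval u with hψdef
        have hψmeas : Measurable ψ := hφmeas.sub hpmeas
        have hψgint : Integrable (fun x => ψ (g x)) (P θ) :=
          hφgint.sub (hPint p)
        calc |∫ x, ψ (g x) * U₀ x ∂(P θ)|
            ≤ ∫ x, ‖ψ (g x) * U₀ x‖ ∂(P θ) := by
              rw [← Real.norm_eq_abs]; exact norm_integral_le_integral_norm _
          _ ≤ ∫ x, 2 * ‖ψ (g x)‖ ∂(P θ) := by
              refine integral_mono_of_nonneg
                (Filter.Eventually.of_forall fun x => norm_nonneg _)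
                (hψgint.norm.const_mul 2)
                (Filter.Eventually.of_forall fun x => ?_)
              show ‖ψ (g x) * U₀ x‖ ≤ 2 * ‖ψ (g x)‖
              rw [norm_mul, mul_comm (2 : ℝ)]
              exact mul_le_mul_of_nonneg_left (hU₀bdd x) (norm_nonneg _)
          _ = 2 * ∫ x, ‖ψ (g x)‖ ∂(P θ) := integral_const_mul 2 _
          _ ≤ 2 * ε := by
              refine mul_le_mul_of_nonneg_left ?_ (by norm_num)
              have hmap : ∫ x, ‖ψ (g x)‖ ∂(P θ) = ∫ u, ‖ψ u‖ ∂(Measure.map g (P θ)) := by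
                rw [integral_map hg.aemeasurable hψmeas.norm.aestronglyMeasurable]
              rw [hmap]
              have h1le : eLpNorm ψ 1 (Measure.map g (P θ))
                  ≤ eLpNorm ψ 2 (Measure.map g (P θ)) :=
                eLpNorm_le_eLpNorm_of_exponent_le one_le_two hψmeas.aestronglyMeasurable
              have hlt : eLpNorm ψ 1 (Measure.map g (P θ)) < ENNReal.ofReal ε :=
                lt_of_le_of_lt h1le hp
              have := ENNReal.toReal_lt_of_lt_ofReal hlt
              have heq1 : ∫ u, ‖ψ u‖ ∂(Measure.map g (P θ))
                  = (eLpNorm ψ 1 (Measure.map g (P θ))).toReal := by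
                rw [integral_norm_eq_lintegral_enorm hψmeas.aestronglyMeasurable,
                  eLpNorm_one_eq_lintegral_enorm]
              rw [heq1]
              exact le_of_lt this
      by_contra hne
      have hpos : 0 < |∫ x, φ (g x) * U₀ x ∂(P θ)| := abs_pos.mpr hne
      have := habs (|∫ x, φ (g x) * U₀ x ∂(P θ)| / 4) (by positivity)
      linarith
    -- translate the indicator identity into a measure identity
    intro A hA
    have h0 := hA0 A hA
    have hAm : MeasurableSet (g ⁻¹' A) := hg hA
    have hexp : (fun x => A.indicator (fun _ => (1 : ℝ)) (g x) * U₀ x)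
        = fun x => (g ⁻¹' A ∩ W ⁻¹' B).indicator (fun _ => (1 : ℝ)) x
            - c * (g ⁻¹' A).indicator (fun _ => (1 : ℝ)) x := by
      funext x
      have hU : U₀ x = (W ⁻¹' B).indicator (fun _ => (1 : ℝ)) x - c := rfl
      by_cases hx1 : x ∈ g ⁻¹' A <;> by_cases hx2 : x ∈ W ⁻¹' B
      · rw [hU, Set.indicator_of_mem (show g x ∈ A from hx1),
          Set.indicator_of_mem hx2, Set.indicator_of_mem (Set.mem_inter hx1 hx2),
          Set.indicator_of_mem hx1]
        simp
      · rw [hU, Set.indicator_of_mem (show g x ∈ A from hx1),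
          Set.indicator_of_notMem hx2,
          Set.indicator_of_notMem (fun h => hx2 h.2),
          Set.indicator_of_mem hx1]
        simp
      · rw [hU, Set.indicator_of_notMem (show g x ∉ A from hx1),
          Set.indicator_of_mem hx2,
          Set.indicator_of_notMem (fun h => hx1 h.1),
          Set.indicator_of_notMem hx1]
        simp
      · rw [hU, Set.indicator_of_notMem (show g x ∉ A from hx1),
          Set.indicator_of_notMem hx2,
          Set.indicator_of_notMem (fun h => hx1 h.1),
          Set.indicator_of_notMem hx1]
        simp
    rw [hexp] at h0
    rw [integral_sub ((integrable_const (1 : ℝ)).indicator (hAm.inter hBm))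
      (((integrable_const (1 : ℝ)).indicator hAm).const_mul c),
      integral_indicator_const (1 : ℝ) (hAm.inter hBm), integral_const_mul,
      integral_indicator_const (1 : ℝ) hAm, smul_eq_mul, smul_eq_mul,
      mul_one, mul_one, sub_eq_zero] at h0
    have hfin1 : P θ (g ⁻¹' A ∩ W ⁻¹' B) ≠ ∞ := measure_ne_top _ _
    have hfin2 : P θ (g ⁻¹' A) * P θ (W ⁻¹' B) ≠ ∞ :=
      ENNReal.mul_ne_top (measure_ne_top _ _) (measure_ne_top _ _)
    rw [← ENNReal.toReal_eq_toReal_iff' hfin1 hfin2, ENNReal.toReal_mul, (show (P θ (g ⁻¹' A ∩ W ⁻¹' B)).toReal = c * (P θ (g ⁻¹' A)).toReal from h0), hcdef]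
    ring
  refine (Measure.prod_eq fun A B hA hB => ?_).symm
  rw [Measure.map_apply (hg.prodMk hW) (hA.prod hB), Set.mk_preimage_prod,
    Measure.map_apply hg hA, Measure.map_apply hW hB]
  exact key B hB A hA
end
end

section
/- Let A ⊆ ℝ² be a Lebesgue-measurable set with finite Lebesgue measure λ(A) < ∞. If the function ρ ↦ ∬_A φ(x, y; ρ) dx dy is constant on (−1, 1), where φ(x, y; ρ) = (1/(2π√(1−ρ²))) exp(−(x² + y² − 2ρxy)/(2(1−ρ²))), then λ(A) = 0. -/
open MeasureTheory
open scoped ENNReal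

noncomputable section

/-- The standardized bivariate normal density with correlation `ρ`. -/
def biGaussDensity (ρ : ℝ) (p : ℝ × ℝ) : ℝ :=
  (1 / (2 * Real.pi * Real.sqrt (1 - ρ ^ 2))) *
    Real.exp (-((p.1 ^ 2 + p.2 ^ 2 - 2 * ρ * p.1 * p.2) / (2 * (1 - ρ ^ 2))))

namespace FlattoShepp
open Complex
def qa (p : ℝ × ℝ) : ℝ := (p.1 + p.2) ^ 2
def qb (p : ℝ × ℝ) : ℝ := (p.1 - p.2) ^ 2
def Phi (z : ℂ) (p : ℝ × ℝ) : ℂ :=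
  -Complex.log (1 - z ^ 2) / 2 - (qa p : ℂ) * (4 * (1 + z))⁻¹ - (qb p : ℂ) * (4 * (1 - z))⁻¹
def PhiD (z : ℂ) (p : ℝ × ℝ) : ℂ :=
  z / (1 - z ^ 2) + (qa p : ℂ) / (4 * (1 + z) ^ 2) - (qb p : ℂ) / (4 * (1 - z) ^ 2)
def Gc (z : ℂ) (p : ℝ × ℝ) : ℂ := (2 * Real.pi : ℂ)⁻¹ * Complex.exp (Phi z p)

lemma onePlus_ne {z : ℂ} (hz : |z.re| < 1) : (1 + z) ≠ 0 := by
  intro h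
  have : (1 + z).re = 0 := by rw [h]; simp
  simp at this; have := abs_lt.1 hz; linarith
lemma oneSub_ne {z : ℂ} (hz : |z.re| < 1) : (1 - z) ≠ 0 := by
  intro h
  have : (1 - z).re = 0 := by rw [h]; simp
  simp at this; have := abs_lt.1 hz; linarith
lemma oneSubSq_slit {z : ℂ} (hz : |z.re| < 1) : (1 - z ^ 2) ∈ Complex.slitPlane := by
  left
  have : (1 - z ^ 2).re = 1 - z.re ^ 2 + z.im ^ 2 := by
    simp [pow_two, Complex.mul_re]; ring
  rw [this]
  have h := abs_lt.1 hz
  nlinarith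
lemma oneSubSq_ne {z : ℂ} (hz : |z.re| < 1) : (1 - z ^ 2) ≠ 0 :=
  Complex.slitPlane_ne_zero (oneSubSq_slit hz)

lemma hasDerivAt_Phi {z : ℂ} (hz : |z.re| < 1) (p : ℝ × ℝ) :
    HasDerivAt (fun w => Phi w p) (PhiD z p) z := by
  have h2 : HasDerivAt (fun w : ℂ => 1 - w ^ 2) (-(2 * z)) z := by
    simpa using (hasDerivAt_pow 2 z).const_sub 1
  have hlog : HasDerivAt (fun w : ℂ => Complex.log (1 - w ^ 2))
      ((1 - z ^ 2)⁻¹ * -(2 * z)) z :=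
    HasDerivAt.comp (h₂ := Complex.log) z (Complex.hasDerivAt_log (oneSubSq_slit hz)) h2
  have hp : HasDerivAt (fun w : ℂ => 4 * (1 + w)) 4 z := by
    simpa using ((hasDerivAt_id z).const_add (1 : ℂ)).const_mul (4 : ℂ)
  have hm : HasDerivAt (fun w : ℂ => 4 * (1 - w)) (-4) z := by
    simpa using ((hasDerivAt_id z).const_sub (1 : ℂ)).const_mul (4 : ℂ)
  have hp4 : (4 : ℂ) * (1 + z) ≠ 0 := by
    simp [onePlus_ne hz]
  have hm4 : (4 : ℂ) * (1 - z) ≠ 0 := by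
    simp [oneSub_ne hz]
  have hA : HasDerivAt (fun w : ℂ => (qa p : ℂ) * (4 * (1 + w))⁻¹)
      ((qa p : ℂ) * (-(4) / (4 * (1 + z)) ^ 2)) z := by
    exact ((hp.inv hp4).const_mul _)
  have hB : HasDerivAt (fun w : ℂ => (qb p : ℂ) * (4 * (1 - w))⁻¹)
      ((qb p : ℂ) * (-(-4) / (4 * (1 - z)) ^ 2)) z := by
    exact ((hm.inv hm4).const_mul _)
  have H := (((hlog.neg).div_const 2).sub hA).sub hB
  refine HasDerivAt.congr_deriv (f := fun w => Phi w p) H ?_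
  have h1 : (1 + z) ≠ 0 := onePlus_ne hz
  have h2' : (1 - z) ≠ 0 := oneSub_ne hz
  have h3 : (1 - z ^ 2) ≠ 0 := oneSubSq_ne hz
  have e1 : -((1 - z ^ 2)⁻¹ * -(2 * z)) / 2 = z / (1 - z ^ 2) := by
    field_simp
  have e2 : (qa p : ℂ) * (-4 / (4 * (1 + z)) ^ 2) = -((qa p : ℂ) / (4 * (1 + z) ^ 2)) := by
    field_simp
  have e3 : (qb p : ℂ) * (- -4 / (4 * (1 - z)) ^ 2) = (qb p : ℂ) / (4 * (1 - z) ^ 2) := by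
    field_simp
  rw [e1, e2, e3, PhiD]
  ring

lemma hasDerivAt_Gc {z : ℂ} (hz : |z.re| < 1) (p : ℝ × ℝ) :
    HasDerivAt (fun w => Gc w p) (PhiD z p * Gc z p) z := by
  have := ((hasDerivAt_Phi hz p).cexp).const_mul ((2 * Real.pi : ℂ))⁻¹
  refine this.congr_deriv ?_
  rw [Gc]; ring



lemma rePhi (z : ℂ) (p : ℝ × ℝ) : (Phi z p).re =
    -(Real.log (‖1 - z ^ 2‖)) / 2 - qa p * ((4 * (1 + z))⁻¹).re
      - qb p * ((4 * (1 - z))⁻¹).re := by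
  have h2 : (-Complex.log (1 - z ^ 2) / 2).re = -(Real.log (‖1 - z ^ 2‖)) / 2 := by
    rw [show ((2:ℂ)) = ((2:ℝ):ℂ) by norm_num, Complex.div_ofReal_re]
    simp [Complex.log_re]
  simp [Phi, Complex.sub_re, Complex.re_ofReal_mul, h2]

lemma texp_le {t s : ℝ} (ht : 0 ≤ t) (hs : 0 < s) : t * Real.exp (-(s * t)) ≤ s⁻¹ := by
  have h := Real.add_one_le_exp (s * t)
  have he : (0:ℝ) < Real.exp (s * t) := Real.exp_pos _
  rw [Real.exp_neg, ← div_eq_mul_inv, div_le_iff₀ he]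
  have hsi : (0:ℝ) < s⁻¹ := inv_pos.2 hs
  calc t = s⁻¹ * (s * t) := by field_simp
  _ ≤ s⁻¹ * Real.exp (s * t) := by nlinarith
  _ = s⁻¹ * Real.exp (s * t) := rfl

lemma qa_nonneg (p : ℝ × ℝ) : 0 ≤ qa p := sq_nonneg _
lemma qb_nonneg (p : ℝ × ℝ) : 0 ≤ qb p := sq_nonneg _

lemma abs_onePlus {z : ℂ} {m : ℝ} (h1 : m ≤ 1 + z.re) : m ≤ ‖1 + z‖ := by
  refine h1.trans ?_
  simpa using Complex.re_le_norm (1 + z)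

lemma abs_oneSub {z : ℂ} {m : ℝ} (h2 : m ≤ 1 - z.re) : m ≤ ‖1 - z‖ := by
  refine h2.trans ?_
  simpa using Complex.re_le_norm (1 - z)

lemma abs_oneSubSq {z : ℂ} {m : ℝ} (hm : 0 < m) (h1 : m ≤ 1 + z.re) (h2 : m ≤ 1 - z.re) :
    m * m ≤ ‖1 - z ^ 2‖ := by
  have : (1 - z ^ 2) = (1 + z) * (1 - z) := by ring
  rw [this, norm_mul]
  exact mul_le_mul (abs_onePlus h1) (abs_oneSub h2) hm.le (norm_nonneg _)

lemma inv_re_onePlus {z : ℂ} : ((4 * (1 + z))⁻¹).re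
    = (1 + z.re) / (4 * ‖1 + z‖ ^ 2) := by
  rw [Complex.inv_re, Complex.normSq_eq_norm_sq]
  have h1 : (4 * (1 + z)).re = 4 * (1 + z.re) := by simp
  have h2 : ‖4 * (1 + z)‖ = 4 * ‖1 + z‖ := by
    rw [norm_mul]; norm_num
  rw [h1, h2]
  ring

lemma inv_re_oneSub {z : ℂ} : ((4 * (1 - z))⁻¹).re
    = (1 - z.re) / (4 * ‖1 - z‖ ^ 2) := by
  rw [Complex.inv_re, Complex.normSq_eq_norm_sq]
  have h1 : (4 * (1 - z)).re = 4 * (1 - z.re) := by simp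
  have h2 : ‖4 * (1 - z)‖ = 4 * ‖1 - z‖ := by
    rw [norm_mul]; norm_num
  rw [h1, h2]
  ring

lemma exp_negLogHalf_le {z : ℂ} {m : ℝ} (hm : 0 < m) (h1 : m ≤ 1 + z.re) (h2 : m ≤ 1 - z.re) :
    Real.exp (-(Real.log (‖1 - z ^ 2‖)) / 2) ≤ m⁻¹ := by
  have habs := abs_oneSubSq hm h1 h2
  have hlog : Real.log (m * m) ≤ Real.log (‖1 - z ^ 2‖) :=
    Real.log_le_log (by positivity) habs
  rw [Real.log_mul hm.ne' hm.ne'] at hlog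
  have : -(Real.log (‖1 - z ^ 2‖)) / 2 ≤ -Real.log m := by linarith
  calc Real.exp (-(Real.log (‖1 - z ^ 2‖)) / 2) ≤ Real.exp (-Real.log m) :=
    Real.exp_le_exp.2 this
  _ = m⁻¹ := by rw [Real.exp_neg, Real.exp_log hm]

lemma norm_Gc_eq (z : ℂ) (p : ℝ × ℝ) :
    ‖Gc z p‖ = (2 * Real.pi)⁻¹ * Real.exp ((Phi z p).re) := by
  rw [Gc, norm_mul, Complex.norm_exp]
  congr 1
  rw [norm_inv]
  congr 1
  rw [show ((2 * Real.pi : ℂ)) = ((2 * Real.pi : ℝ) : ℂ) by push_cast; ring,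
    Complex.norm_real, Real.norm_eq_abs, abs_of_pos (by positivity)]

lemma norm_Gc_le {z : ℂ} {m : ℝ} (hm : 0 < m) (h1 : m ≤ 1 + z.re) (h2 : m ≤ 1 - z.re)
    (p : ℝ × ℝ) : ‖Gc z p‖ ≤ (2 * Real.pi)⁻¹ * m⁻¹ := by
  rw [norm_Gc_eq, rePhi]
  have ha : 0 ≤ qa p * ((4 * (1 + z))⁻¹).re := by
    rw [inv_re_onePlus]
    have := abs_onePlus h1
    apply mul_nonneg (qa_nonneg p)
    apply div_nonneg (by linarith) (by positivity)
  have hb : 0 ≤ qb p * ((4 * (1 - z))⁻¹).re := by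
    rw [inv_re_oneSub]
    have := abs_oneSub h2
    apply mul_nonneg (qb_nonneg p)
    apply div_nonneg (by linarith) (by positivity)
  have key : Real.exp (-Real.log (‖1 - z ^ 2‖) / 2 - qa p * ((4 * (1 + z))⁻¹).re
      - qb p * ((4 * (1 - z))⁻¹).re) ≤ Real.exp (-Real.log (‖1 - z ^ 2‖) / 2) :=
    Real.exp_le_exp.2 (by linarith)
  exact mul_le_mul_of_nonneg_left (key.trans (exp_negLogHalf_le hm h1 h2)) (by positivity)

lemma texp2 {m t c : ℝ} (hm : 0 < m) (ht : 0 ≤ t) (h : m * t ≤ c) :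
    t * Real.exp (-c) ≤ m⁻¹ := by
  have hle : Real.exp (-c) ≤ Real.exp (-(m * t)) := Real.exp_le_exp.2 (by linarith)
  calc t * Real.exp (-c) ≤ t * Real.exp (-(m * t)) :=
    mul_le_mul_of_nonneg_left hle ht
  _ ≤ m⁻¹ := texp_le ht hm

lemma real_combine {m R T1 T2 T3 E0 E1 E2 : ℝ} (hm : 0 < m) (hR : 0 ≤ R)
    (hT1 : 0 ≤ T1) (hT2 : 0 ≤ T2) (hT3 : 0 ≤ T3)
    (hE0 : 0 < E0) (hE1 : 0 < E1) (hE2 : 0 < E2)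
    (hT1le : T1 ≤ R / (m * m)) (hE0le : E0 ≤ m⁻¹) (hE1le : E1 ≤ 1) (hE2le : E2 ≤ 1)
    (hT2E1 : T2 * E1 ≤ m⁻¹) (hT3E2 : T3 * E2 ≤ m⁻¹) :
    (T1 + T2 + T3) * (E0 * E1 * E2) ≤ m⁻¹ * (R / (m * m) + m⁻¹ + m⁻¹) := by
  have hmi : (0:ℝ) < m⁻¹ := inv_pos.2 hm
  have hE02 : E0 * E2 ≤ m⁻¹ := le_trans (mul_le_of_le_one_right hE0.le hE2le) hE0le
  have hE01 : E0 * E1 ≤ m⁻¹ := le_trans (mul_le_of_le_one_right hE0.le hE1le) hE0le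
  have hE012 : E0 * E1 * E2 ≤ m⁻¹ := le_trans (mul_le_of_le_one_right (by positivity) hE2le) hE01
  have b1 : T1 * (E0 * E1 * E2) ≤ (R / (m * m)) * m⁻¹ :=
    mul_le_mul hT1le hE012 (by positivity) (by positivity)
  have b2 : (T2 * E1) * (E0 * E2) ≤ m⁻¹ * m⁻¹ :=
    mul_le_mul hT2E1 hE02 (by positivity) (by positivity)
  have b3 : (T3 * E2) * (E0 * E1) ≤ m⁻¹ * m⁻¹ :=
    mul_le_mul hT3E2 hE01 (by positivity) (by positivity)
  calc (T1 + T2 + T3) * (E0 * E1 * E2)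
      = T1 * (E0 * E1 * E2) + (T2 * E1) * (E0 * E2) + (T3 * E2) * (E0 * E1) := by ring
  _ ≤ (R / (m * m)) * m⁻¹ + m⁻¹ * m⁻¹ + m⁻¹ * m⁻¹ := by linarith
  _ = m⁻¹ * (R / (m * m) + m⁻¹ + m⁻¹) := by ring

lemma norm_PhiD_le {z : ℂ} (p : ℝ × ℝ) :
    ‖PhiD z p‖ ≤ ‖z‖ / ‖1 - z ^ 2‖
      + qa p / (4 * ‖1 + z‖ ^ 2) + qb p / (4 * ‖1 - z‖ ^ 2) := by
  have e2 : ‖(qa p : ℂ) / (4 * (1 + z) ^ 2)‖ = qa p / (4 * ‖1 + z‖ ^ 2) := by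
    rw [norm_div, norm_mul, norm_pow, Complex.norm_real, Real.norm_eq_abs,
      _root_.abs_of_nonneg (qa_nonneg p)]
    norm_num
  have e3 : ‖(qb p : ℂ) / (4 * (1 - z) ^ 2)‖ = qb p / (4 * ‖1 - z‖ ^ 2) := by
    rw [norm_div, norm_mul, norm_pow, Complex.norm_real, Real.norm_eq_abs,
      _root_.abs_of_nonneg (qb_nonneg p)]
    norm_num
  have e1 : ‖z / (1 - z ^ 2)‖ = ‖z‖ / ‖1 - z ^ 2‖ := by
    rw [norm_div]
  calc ‖PhiD z p‖ ≤ ‖z / (1 - z ^ 2) + (qa p : ℂ) / (4 * (1 + z) ^ 2)‖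
        + ‖(qb p : ℂ) / (4 * (1 - z) ^ 2)‖ := norm_sub_le _ _
  _ ≤ ‖z / (1 - z ^ 2)‖ + ‖(qa p : ℂ) / (4 * (1 + z) ^ 2)‖
        + ‖(qb p : ℂ) / (4 * (1 - z) ^ 2)‖ := by
      have := norm_add_le (z / (1 - z ^ 2)) ((qa p : ℂ) / (4 * (1 + z) ^ 2))
      linarith
  _ = _ := by rw [e1, e2, e3]

lemma norm_Gc_eq' (z : ℂ) (p : ℝ × ℝ) :
    ‖Gc z p‖ = (2 * Real.pi)⁻¹ * (Real.exp (-Real.log (‖1 - z ^ 2‖) / 2)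
      * Real.exp (-(qa p * ((4 * (1 + z))⁻¹).re)) * Real.exp (-(qb p * ((4 * (1 - z))⁻¹).re))) := by
  rw [norm_Gc_eq, rePhi, ← Real.exp_add, ← Real.exp_add]
  ring_nf

lemma norm_GcD_le {z : ℂ} {m R : ℝ} (hm : 0 < m) (h1 : m ≤ 1 + z.re) (h2 : m ≤ 1 - z.re)
    (hR : ‖z‖ ≤ R) (p : ℝ × ℝ) :
    ‖PhiD z p * Gc z p‖ ≤ (2 * Real.pi)⁻¹ * (m⁻¹ * (R / (m * m) + m⁻¹ + m⁻¹)) := by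
  have hup : (0:ℝ) < ‖1 + z‖ := lt_of_lt_of_le hm (abs_onePlus h1)
  have hum : (0:ℝ) < ‖1 - z‖ := lt_of_lt_of_le hm (abs_oneSub h2)
  have habs3 := abs_oneSubSq hm h1 h2
  have habs3' : (0:ℝ) < ‖1 - z ^ 2‖ := lt_of_lt_of_le (by positivity) habs3
  have ha : 0 ≤ qa p := qa_nonneg p
  have hb : 0 ≤ qb p := qb_nonneg p
  have hR0 : 0 ≤ R := le_trans (norm_nonneg z) hR
  have hT1le : ‖z‖ / ‖1 - z ^ 2‖ ≤ R / (m * m) :=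
    div_le_div₀ hR0 hR (by positivity) habs3
  have hT2E1 : (qa p / (4 * ‖1 + z‖ ^ 2))
      * Real.exp (-(qa p * ((4 * (1 + z))⁻¹).re)) ≤ m⁻¹ := by
    apply texp2 hm (by positivity)
    rw [inv_re_onePlus]
    rw [show m * (qa p / (4 * ‖1 + z‖ ^ 2))
      = qa p * (m / (4 * ‖1 + z‖ ^ 2)) by ring]
    gcongr
  have hT3E2 : (qb p / (4 * ‖1 - z‖ ^ 2))
      * Real.exp (-(qb p * ((4 * (1 - z))⁻¹).re)) ≤ m⁻¹ := by
    apply texp2 hm (by positivity)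
    rw [inv_re_oneSub]
    rw [show m * (qb p / (4 * ‖1 - z‖ ^ 2))
      = qb p * (m / (4 * ‖1 - z‖ ^ 2)) by ring]
    gcongr
  rw [norm_mul, norm_Gc_eq' z p]
  calc ‖PhiD z p‖ * ((2 * Real.pi)⁻¹ * (Real.exp (-Real.log (‖1 - z ^ 2‖) / 2)
        * Real.exp (-(qa p * ((4 * (1 + z))⁻¹).re)) * Real.exp (-(qb p * ((4 * (1 - z))⁻¹).re))))
      = (2 * Real.pi)⁻¹ * (‖PhiD z p‖ * (Real.exp (-Real.log (‖1 - z ^ 2‖) / 2)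
        * Real.exp (-(qa p * ((4 * (1 + z))⁻¹).re))
        * Real.exp (-(qb p * ((4 * (1 - z))⁻¹).re)))) := by ring
  _ ≤ (2 * Real.pi)⁻¹ * (m⁻¹ * (R / (m * m) + m⁻¹ + m⁻¹)) := by
      apply mul_le_mul_of_nonneg_left _ (by positivity)
      refine le_trans (mul_le_mul_of_nonneg_right (norm_PhiD_le p) (by positivity)) ?_
      apply real_combine hm hR0 (by positivity) (by positivity) (by positivity)
        (Real.exp_pos _) (Real.exp_pos _) (Real.exp_pos _) hT1le
        (exp_negLogHalf_le hm h1 h2) (Real.exp_le_one_iff.2 ?_) (Real.exp_le_one_iff.2 ?_)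
        hT2E1 hT3E2
      · rw [inv_re_onePlus]
        have : 0 ≤ qa p * ((1 + z.re) / (4 * ‖1 + z‖ ^ 2)) :=
          mul_nonneg ha (div_nonneg (by linarith) (by positivity))
        linarith
      · rw [inv_re_oneSub]
        have : 0 ≤ qb p * ((1 - z.re) / (4 * ‖1 - z‖ ^ 2)) :=
          mul_nonneg hb (div_nonneg (by linarith) (by positivity))
        linarith


lemma Gc_ofReal {ρ : ℝ} (hρ : ρ ∈ Set.Ioo (-1:ℝ) 1) (p : ℝ × ℝ) :
    Gc (ρ : ℂ) p = ((biGaussDensity ρ p : ℝ) : ℂ) := by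
  obtain ⟨hρ1, hρ2⟩ := hρ
  have hpos : (0:ℝ) < 1 - ρ ^ 2 := by nlinarith
  have hp1 : (0:ℝ) < 1 + ρ := by linarith
  have hp2 : (0:ℝ) < 1 - ρ := by linarith
  have h1 : (1:ℂ) - (ρ:ℂ) ^ 2 = ((1 - ρ ^ 2 : ℝ) : ℂ) := by push_cast; ring
  have hPhi : Phi (ρ : ℂ) p
      = ((-Real.log (1 - ρ ^ 2) / 2 - qa p * (4 * (1 + ρ))⁻¹ - qb p * (4 * (1 - ρ))⁻¹ : ℝ) : ℂ) := by
    rw [Phi, h1, ← Complex.ofReal_log hpos.le]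
    have h4p : ((4 * (1 + ρ) : ℝ) : ℂ) = 4 * (1 + (ρ:ℂ)) := by push_cast; ring
    have h4m : ((4 * (1 - ρ) : ℝ) : ℂ) = 4 * (1 - (ρ:ℂ)) := by push_cast; ring
    rw [← h4p, ← h4m]
    push_cast
    ring
  rw [Gc, hPhi, ← Complex.ofReal_exp]
  rw [show ((2 * Real.pi : ℂ))⁻¹ = (((2 * Real.pi)⁻¹ : ℝ) : ℂ) by push_cast; ring]
  rw [← Complex.ofReal_mul]
  congr 1
  -- now a real identity
  have hsq : (0:ℝ) < Real.sqrt (1 - ρ ^ 2) := Real.sqrt_pos.2 hpos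
  have e1 : Real.exp (-Real.log (1 - ρ ^ 2) / 2) = (Real.sqrt (1 - ρ ^ 2))⁻¹ := by
    rw [show -Real.log (1 - ρ ^ 2) / 2 = -(Real.log (1 - ρ ^ 2) / 2) by ring,
      ← Real.log_sqrt hpos.le, Real.exp_neg, Real.exp_log hsq]
  have e2 : qa p * (4 * (1 + ρ))⁻¹ + qb p * (4 * (1 - ρ))⁻¹
      = (p.1 ^ 2 + p.2 ^ 2 - 2 * ρ * p.1 * p.2) / (2 * (1 - ρ ^ 2)) := by
    rw [qa, qb]
    field_simp
    ring
  rw [show -Real.log (1 - ρ ^ 2) / 2 - qa p * (4 * (1 + ρ))⁻¹ - qb p * (4 * (1 - ρ))⁻¹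
      = -Real.log (1 - ρ ^ 2) / 2
        + -(qa p * (4 * (1 + ρ))⁻¹ + qb p * (4 * (1 - ρ))⁻¹) by ring,
    Real.exp_add, e1, e2, biGaussDensity]
  rw [mul_comm (2 * Real.pi) (Real.sqrt (1 - ρ ^ 2))]
  rw [one_div, mul_inv]
  ring

lemma continuous_Gc (z : ℂ) : Continuous (fun p => Gc z p) := by
  unfold Gc Phi qa qb
  fun_prop

lemma continuous_GcD (z : ℂ) : Continuous (fun p => PhiD z p * Gc z p) := by
  unfold Gc Phi PhiD qa qb
  fun_prop

def Strip : Set ℂ := {z : ℂ | |z.re| < 1}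

lemma isOpen_Strip : IsOpen Strip :=
  isOpen_lt (continuous_abs.comp Complex.continuous_re) continuous_const

lemma convex_Strip : Convex ℝ Strip := by
  intro x hx y hy a b ha hb hab
  simp only [Strip, Set.mem_setOf_eq] at *
  have hre : (a • x + b • y).re = a * x.re + b * y.re := by
    simp [Complex.add_re, Complex.smul_re]
  rw [hre]
  rcases eq_or_lt_of_le ha with h | h
  · have hb1 : b = 1 := by linarith
    simp [← h, hb1]
    exact hy
  · have h1 : |a * x.re + b * y.re| ≤ a * |x.re| + b * |y.re| := by
      calc |a * x.re + b * y.re| ≤ |a * x.re| + |b * y.re| := abs_add_le _ _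
      _ = a * |x.re| + b * |y.re| := by
          rw [abs_mul, abs_mul, _root_.abs_of_nonneg ha, _root_.abs_of_nonneg hb]
    have h2 : a * |x.re| < a * 1 := by exact mul_lt_mul_of_pos_left hx h
    have h3 : b * |y.re| ≤ b * 1 := mul_le_mul_of_nonneg_left hy.le hb
    nlinarith

lemma hasDerivAt_F {A : Set (ℝ × ℝ)} (hfin : volume A < ⊤) {z₀ : ℂ} (hz₀ : z₀ ∈ Strip) :
    HasDerivAt (fun z => ∫ p in A, Gc z p) (∫ p in A, PhiD z₀ p * Gc z₀ p) z₀ := by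
  haveI : IsFiniteMeasure (volume.restrict A) :=
    ⟨by rwa [Measure.restrict_apply_univ]⟩
  have hz₀' : |z₀.re| < 1 := hz₀
  set m : ℝ := (1 - |z₀.re|) / 2 with hm_def
  have hm : 0 < m := by
    rw [hm_def]; linarith
  set R : ℝ := ‖z₀‖ + m with hR_def
  -- facts about points of the ball
  have hball : ∀ z ∈ Metric.ball z₀ m,
      |z.re| < 1 ∧ m ≤ 1 + z.re ∧ m ≤ 1 - z.re ∧ ‖z‖ ≤ R := by
    intro z hz
    rw [Metric.mem_ball, Complex.dist_eq] at hz
    have hre : |z.re - z₀.re| ≤ ‖z - z₀‖ := by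
      simpa using Complex.abs_re_le_norm (z - z₀)
    have h1 : |z.re| < |z₀.re| + m := by
      have := abs_sub_abs_le_abs_sub z.re z₀.re
      have := abs_sub_abs_le_abs_sub z₀.re z.re
      rw [abs_sub_comm] at this
      linarith [hre.trans_lt hz, abs_sub_abs_le_abs_sub z.re z₀.re]
    have h1' : |z.re| < 1 - m := by
      rw [hm_def] at h1 ⊢
      linarith
    have h2 := abs_lt.1 h1'
    refine ⟨abs_lt.2 ⟨by linarith [h2.1], by linarith [h2.2]⟩, by linarith [h2.1],
      by linarith [h2.2], ?_⟩
    calc ‖z‖ = ‖z₀ + (z - z₀)‖ := by ring_nf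
    _ ≤ ‖z₀‖ + ‖z - z₀‖ := norm_add_le _ _
    _ ≤ R := by rw [hR_def]; linarith
  have hz₀ball : z₀ ∈ Metric.ball z₀ m := Metric.mem_ball_self hm
  obtain ⟨hs1, hs2, hs3, hs4⟩ := hball z₀ hz₀ball
  have main := hasDerivAt_integral_of_dominated_loc_of_deriv_le
    (F := fun z p => Gc z p) (F' := fun z p => PhiD z p * Gc z p)
    (x₀ := z₀) (μ := volume.restrict A)
    (bound := fun _ => (2 * Real.pi)⁻¹ * (m⁻¹ * (R / (m * m) + m⁻¹ + m⁻¹)))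
    (Metric.ball_mem_nhds z₀ hm)
    (Filter.Eventually.of_forall fun z => (continuous_Gc z).aestronglyMeasurable)
    ((integrable_const ((2 * Real.pi)⁻¹ * m⁻¹)).mono'
      (continuous_Gc z₀).aestronglyMeasurable
      (Filter.Eventually.of_forall fun p => norm_Gc_le hm hs2 hs3 p))
    (continuous_GcD z₀).aestronglyMeasurable
    (Filter.Eventually.of_forall fun p z hz => by
      obtain ⟨_, h2, h3, h4⟩ := hball z hz
      exact norm_GcD_le hm h2 h3 h4 p)
    (integrable_const _)
    (Filter.Eventually.of_forall fun p z hz => by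
      obtain ⟨h1, _, _, _⟩ := hball z hz
      exact hasDerivAt_Gc h1 p)
  exact main.2

lemma analyticOnNhd_F {A : Set (ℝ × ℝ)} (hfin : volume A < ⊤) :
    AnalyticOnNhd ℂ (fun z => ∫ p in A, Gc z p) Strip :=
  DifferentiableOn.analyticOnNhd
    (fun _ hz => ((hasDerivAt_F hfin hz).differentiableAt).differentiableWithinAt)
    isOpen_Strip

lemma norm_Gc_iT (t : ℝ) (p : ℝ × ℝ) :
    ‖Gc ((t:ℂ) * Complex.I) p‖ ≤ (2 * Real.pi)⁻¹ * (Real.sqrt (1 + t ^ 2))⁻¹ := by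
  rw [norm_Gc_eq, rePhi]
  have ht2 : (0:ℝ) < 1 + t ^ 2 := by positivity
  have habs : ‖1 - ((t:ℂ) * Complex.I) ^ 2‖ = 1 + t ^ 2 := by
    have hsq : (1:ℂ) - ((t:ℂ) * Complex.I) ^ 2 = (((1 + t ^ 2 : ℝ)):ℂ) := by
      have : ((t:ℂ) * Complex.I) ^ 2 = (t:ℂ) ^ 2 * Complex.I ^ 2 := by ring
      rw [this, Complex.I_sq]
      push_cast
      ring
    rw [hsq, Complex.norm_real, Real.norm_eq_abs, _root_.abs_of_nonneg ht2.le]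
  have hre : ((t:ℂ) * Complex.I).re = 0 := by simp
  have ha : 0 ≤ qa p * ((4 * (1 + (t:ℂ) * Complex.I))⁻¹).re := by
    rw [inv_re_onePlus, hre]
    exact mul_nonneg (qa_nonneg p) (div_nonneg (by norm_num) (by positivity))
  have hb : 0 ≤ qb p * ((4 * (1 - (t:ℂ) * Complex.I))⁻¹).re := by
    rw [inv_re_oneSub, hre]
    exact mul_nonneg (qb_nonneg p) (div_nonneg (by norm_num) (by positivity))
  have key : Real.exp (-Real.log (‖1 - ((t:ℂ) * Complex.I) ^ 2‖) / 2
      - qa p * ((4 * (1 + (t:ℂ) * Complex.I))⁻¹).re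
      - qb p * ((4 * (1 - (t:ℂ) * Complex.I))⁻¹).re)
      ≤ (Real.sqrt (1 + t ^ 2))⁻¹ := by
    have h1 : Real.exp (-Real.log (‖1 - ((t:ℂ) * Complex.I) ^ 2‖) / 2
        - qa p * ((4 * (1 + (t:ℂ) * Complex.I))⁻¹).re
        - qb p * ((4 * (1 - (t:ℂ) * Complex.I))⁻¹).re)
        ≤ Real.exp (-Real.log (1 + t ^ 2) / 2) := by
      apply Real.exp_le_exp.2
      rw [habs]
      linarith
    refine h1.trans ?_
    rw [show -Real.log (1 + t ^ 2) / 2 = -(Real.log (1 + t ^ 2) / 2) by ring,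
      ← Real.log_sqrt ht2.le, Real.exp_neg, Real.exp_log (Real.sqrt_pos.2 ht2)]
  exact mul_le_mul_of_nonneg_left key (by positivity)

theorem flatto_shepp' (A : Set (ℝ × ℝ)) (hA : MeasurableSet A) (hfin : volume A < ⊤)
    (hconst : ∀ ρ ρ' : ℝ, ρ ∈ Set.Ioo (-1 : ℝ) 1 → ρ' ∈ Set.Ioo (-1 : ℝ) 1 →
      ∫ p in A, biGaussDensity ρ p = ∫ p in A, biGaussDensity ρ' p) :
    volume A = 0 := by
  by_contra hvol
  haveI : IsFiniteMeasure (volume.restrict A) := ⟨by rwa [Measure.restrict_apply_univ]⟩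
  have hmem0 : (0:ℂ) ∈ Strip := by simp [Strip]
  have h0I : (0:ℝ) ∈ Set.Ioo (-1:ℝ) 1 := by norm_num
  have hreal : ∀ ρ : ℝ, ρ ∈ Set.Ioo (-1:ℝ) 1 →
      (∫ p in A, Gc (ρ:ℂ) p) = ((∫ p in A, biGaussDensity ρ p : ℝ) : ℂ) := by
    intro ρ hρ
    rw [integral_congr_ae (Filter.Eventually.of_forall fun p => Gc_ofReal hρ p)]
    exact integral_ofReal
  have hreal0 : (∫ p in A, Gc (0:ℂ) p) = ((∫ p in A, biGaussDensity 0 p : ℝ) : ℂ) := by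
    have := hreal 0 h0I
    rwa [Complex.ofReal_zero] at this
  have hEq : Set.EqOn (fun z => ∫ p in A, Gc z p) (fun _ => ∫ p in A, Gc (0:ℂ) p) Strip := by
    apply AnalyticOnNhd.eqOn_of_preconnected_of_frequently_eq (analyticOnNhd_F hfin)
      analyticOnNhd_const convex_Strip.isPreconnected hmem0
    have h1 : Filter.Tendsto (fun n : ℕ => (((n:ℝ) + 2)⁻¹ : ℝ)) Filter.atTop (nhds 0) :=
      Filter.Tendsto.inv_tendsto_atTop
        (Filter.tendsto_atTop_add_const_right _ 2 tendsto_natCast_atTop_atTop)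
    have h2 : Filter.Tendsto (fun n : ℕ => ((((n:ℝ) + 2)⁻¹ : ℝ) : ℂ))
        Filter.atTop (nhds (0:ℂ)) := by
      have := (Complex.continuous_ofReal.tendsto 0).comp h1
      simpa [Function.comp_def] using this
    have h3 : Filter.Tendsto (fun n : ℕ => ((((n:ℝ) + 2)⁻¹ : ℝ) : ℂ))
        Filter.atTop (nhdsWithin (0:ℂ) {(0:ℂ)}ᶜ) := by
      apply tendsto_nhdsWithin_of_tendsto_nhds_of_eventually_within _ h2
      apply Filter.Eventually.of_forall
      intro n
      simp only [Set.mem_compl_iff, Set.mem_singleton_iff, Complex.ofReal_eq_zero]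
      positivity
    apply h3.frequently
    apply Filter.Frequently.of_forall
    intro n
    have hn2 : (0:ℝ) < (n:ℝ) + 2 := by positivity
    have hmemI : (((n:ℝ) + 2)⁻¹) ∈ Set.Ioo (-1:ℝ) 1 := by
      constructor
      · have : (0:ℝ) < ((n:ℝ) + 2)⁻¹ := by positivity
        linarith
      · rw [inv_lt_one_iff₀]
        right
        linarith
    show (∫ p in A, Gc (((((n:ℝ) + 2)⁻¹ : ℝ)):ℂ) p) = ∫ p in A, Gc (0:ℂ) p
    rw [hreal _ hmemI, hreal0, hconst _ 0 hmemI h0I]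
  have hiT : ∀ t : ℝ, (∫ p in A, Gc ((t:ℂ) * Complex.I) p) = ∫ p in A, Gc (0:ℂ) p := by
    intro t
    exact hEq (by simp [Strip])
  have hbound : ∀ t : ℝ, ‖∫ p in A, Gc ((t:ℂ) * Complex.I) p‖
      ≤ ((2 * Real.pi)⁻¹ * (Real.sqrt (1 + t ^ 2))⁻¹) * (volume A).toReal := by
    intro t
    exact norm_setIntegral_le_of_norm_le_const hfin (fun p _ => norm_Gc_iT t p)
  -- conclude that the integral at 0 vanishes
  have hF0 : (∫ p in A, Gc (0:ℂ) p) = 0 := by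
    by_contra hne
    have hpos : 0 < ‖∫ p in A, Gc (0:ℂ) p‖ := norm_pos_iff.2 hne
    have hK0 : (0:ℝ) ≤ (2 * Real.pi)⁻¹ * (volume A).toReal := by positivity
    set N := ‖∫ p in A, Gc (0:ℂ) p‖ with hN
    set K := (2 * Real.pi)⁻¹ * (volume A).toReal with hK
    set t := (K + 1) / N with ht_def
    have htpos : 0 < t := by positivity
    have hsqrt : t ≤ Real.sqrt (1 + t ^ 2) := by
      have hs1 := Real.sq_sqrt (show (0:ℝ) ≤ 1 + t ^ 2 by positivity)
      have hs2 := Real.sqrt_nonneg (1 + t ^ 2)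
      nlinarith
    have hinv : (Real.sqrt (1 + t ^ 2))⁻¹ ≤ t⁻¹ := by
      apply inv_anti₀ htpos hsqrt
    have hchain : N ≤ K * t⁻¹ := by
      have h1 : N = ‖∫ p in A, Gc ((t:ℂ) * Complex.I) p‖ := by rw [hiT t]
      have h2 := hbound t
      rw [← h1] at h2
      refine h2.trans ?_
      have : (2 * Real.pi)⁻¹ * (Real.sqrt (1 + t ^ 2))⁻¹ * (volume A).toReal
          = ((2 * Real.pi)⁻¹ * (volume A).toReal) * (Real.sqrt (1 + t ^ 2))⁻¹ := by ring
      rw [this, ← hK]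
      exact mul_le_mul_of_nonneg_left hinv hK0
    have htinv : t⁻¹ = N / (K + 1) := by
      rw [ht_def, inv_div]
    rw [htinv] at hchain
    have hKpos : (0:ℝ) < K + 1 := by linarith
    have hrw : K * (N / (K + 1)) = K * N / (K + 1) := by ring
    rw [hrw] at hchain
    have h2 : N * (K + 1) ≤ K * N := (le_div_iff₀ hKpos).1 hchain
    nlinarith
  have hint0 : (∫ p in A, biGaussDensity 0 p) = 0 := by
    have := hreal0.symm.trans hF0
    exact_mod_cast this
  -- positivity of the density at ρ = 0
  have hposfun : ∀ p : ℝ × ℝ, 0 < biGaussDensity 0 p := by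
    intro p
    rw [biGaussDensity]
    have h1 : (0:ℝ) < 1 / (2 * Real.pi * Real.sqrt (1 - 0 ^ 2)) := by
      norm_num
      positivity
    exact mul_pos h1 (Real.exp_pos _)
  have hcont : Continuous (biGaussDensity 0) := by
    unfold biGaussDensity
    fun_prop
  have hIntOn : IntegrableOn (biGaussDensity 0) A volume := by
    apply Integrable.mono' (integrable_const (1 / (2 * Real.pi)))
      hcont.aestronglyMeasurable
    apply Filter.Eventually.of_forall
    intro p
    rw [Real.norm_eq_abs, _root_.abs_of_pos (hposfun p), biGaussDensity]
    have hsqrt1 : Real.sqrt (1 - (0:ℝ) ^ 2) = 1 := by norm_num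
    rw [hsqrt1]
    have hexp : Real.exp (-((p.1 ^ 2 + p.2 ^ 2 - 2 * 0 * p.1 * p.2) / (2 * (1 - (0:ℝ) ^ 2)))) ≤ 1 := by
      apply Real.exp_le_one_iff.2
      have : (0:ℝ) ≤ (p.1 ^ 2 + p.2 ^ 2 - 2 * 0 * p.1 * p.2) / (2 * (1 - (0:ℝ) ^ 2)) := by
        apply div_nonneg (by nlinarith [sq_nonneg p.1, sq_nonneg p.2]) (by norm_num)
      linarith
    calc 1 / (2 * Real.pi * 1) * Real.exp (-((p.1 ^ 2 + p.2 ^ 2 - 2 * 0 * p.1 * p.2) / (2 * (1 - (0:ℝ) ^ 2))))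
        ≤ 1 / (2 * Real.pi * 1) * 1 := by
          apply mul_le_mul_of_nonneg_left hexp (by positivity)
    _ = 1 / (2 * Real.pi) := by ring
  have hA_pos : 0 < volume A := lt_of_le_of_ne zero_le (Ne.symm hvol)
  have hsupp : Function.support (biGaussDensity 0) ∩ A = A :=
    Set.inter_eq_right.mpr fun p _ => (hposfun p).ne'
  have hlt : (0:ℝ) < ∫ p in A, biGaussDensity 0 p := by
    rw [setIntegral_pos_iff_support_of_nonneg_ae
      (Filter.Eventually.of_forall fun p => (hposfun p).le) hIntOn]
    rw [hsupp]
    exact hA_pos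
  rw [hint0] at hlt
  exact lt_irrefl 0 hlt

end FlattoShepp

/-- Flatto–Shepp. If `A ⊆ ℝ²` is measurable with finite Lebesgue measure and
`ρ ↦ ∬_A φ(x, y; ρ) dx dy` is constant on `(-1, 1)`, then `A` is Lebesgue-null. -/
theorem flatto_shepp (A : Set (ℝ × ℝ)) (hA : MeasurableSet A) (hfin : volume A < ⊤)
    (hconst : ∀ ρ ρ' : ℝ, ρ ∈ Set.Ioo (-1 : ℝ) 1 → ρ' ∈ Set.Ioo (-1 : ℝ) 1 →
      ∫ p in A, biGaussDensity ρ p = ∫ p in A, biGaussDensity ρ' p) :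
    volume A = 0 :=
  FlattoShepp.flatto_shepp' A hA hfin hconst
end
end
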